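/- For integers d ≥ 3 and 1 ≤ s ≤ ⌊(d-1)/2⌋, the quantity C(s,d) = s(d-s-1)(d - 2(⌊(d-1)/2⌋ - s + 1)) - 2·Σ_{i=1}^{s-1} i(d-i-1) is nonnegative; in fact C(s,d) > s(d-s-1) - 1 (i.e., C(s,d) ≥ s(d-s-1)). -/

import Mathlib

open Finset

/-- For `d ≥ 3` and `1 ≤ s ≤ ⌊(d-1)/2⌋`, with `D = ⌊(d-1)/2⌋`, the quantity
`C(s,d) = s(d-s-1)(d - 2(D - s + 1)) - 2 Σ_{i=1}^{s-1} i(d-i-1)`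
is nonnegative; in fact `C(s,d) ≥ s(d-s-1)`. -/
theorem C_sd_nonneg (d s : ℕ) (hd : 3 ≤ d) (hs : 1 ≤ s) (hsD : s ≤ (d - 1) / 2) :
    0 ≤ (s : ℤ) * ((d : ℤ) - s - 1) * ((d : ℤ) - 2 * ((((d - 1) / 2 : ℕ) : ℤ) - s + 1))
        - 2 * ∑ i ∈ Finset.Icc 1 (s - 1), (i : ℤ) * ((d : ℤ) - i - 1) ∧
    (s : ℤ) * ((d : ℤ) - s - 1)
      ≤ (s : ℤ) * ((d : ℤ) - s - 1) * ((d : ℤ) - 2 * ((((d - 1) / 2 : ℕ) : ℤ) - s + 1))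
        - 2 * ∑ i ∈ Finset.Icc 1 (s - 1), (i : ℤ) * ((d : ℤ) - i - 1) := by
  have hD1 : 2 * ((d - 1) / 2) + 1 ≤ d := by omega
  have h2s : 2 * s ≤ d - 1 := by omega
  have h2sz : 2 * (s : ℤ) + 1 ≤ (d : ℤ) := by exact_mod_cast (by omega : 2 * s + 1 ≤ d)
  have hDz : 2 * ((((d - 1) / 2 : ℕ) : ℤ)) + 1 ≤ (d : ℤ) := by exact_mod_cast hD1
  have hsDz : (s : ℤ) ≤ (((d - 1) / 2 : ℕ) : ℤ) := by exact_mod_cast hsD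
  have hsz : (1 : ℤ) ≤ (s : ℤ) := by exact_mod_cast hs
  -- termwise bound on the sum
  have hterm : ∀ i ∈ Finset.Icc 1 (s - 1),
      (i : ℤ) * ((d : ℤ) - i - 1) ≤ (s : ℤ) * ((d : ℤ) - s - 1) := by
    intro i hi
    simp only [Finset.mem_Icc] at hi
    have hi1 : (1 : ℤ) ≤ (i : ℤ) := by exact_mod_cast hi.1
    have hi2 : (i : ℤ) ≤ (s : ℤ) - 1 := by
      have : i + 1 ≤ s := by omega
      have := (Nat.cast_le (α := ℤ)).2 this
      push_cast at this; linarith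
    nlinarith [mul_nonneg (by linarith : (0:ℤ) ≤ (s:ℤ) - i)
      (by nlinarith : (0:ℤ) ≤ (d:ℤ) - 1 - s - i)]
  have hcard : (Finset.Icc 1 (s - 1)).card = s - 1 := by
    rw [Nat.card_Icc]; omega
  have hsum : ∑ i ∈ Finset.Icc 1 (s - 1), (i : ℤ) * ((d : ℤ) - i - 1)
      ≤ ((s : ℤ) - 1) * ((s : ℤ) * ((d : ℤ) - s - 1)) := by
    have := Finset.sum_le_card_nsmul (Finset.Icc 1 (s - 1))
      (fun i => (i : ℤ) * ((d : ℤ) - i - 1)) ((s : ℤ) * ((d : ℤ) - s - 1)) hterm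
    rw [hcard, nsmul_eq_mul] at this
    have hcast : (((s - 1 : ℕ)) : ℤ) = (s : ℤ) - 1 := by
      have : 1 ≤ s := hs
      push_cast [Nat.cast_sub this]; ring
    rw [hcast] at this
    exact this
  set S := ∑ i ∈ Finset.Icc 1 (s - 1), (i : ℤ) * ((d : ℤ) - i - 1) with hS
  have hnn : 0 ≤ (s : ℤ) * ((d : ℤ) - s - 1) := by nlinarith
  constructor
  · nlinarith [mul_nonneg hnn (by linarith : (0:ℤ) ≤ (d:ℤ) - 2 * ((((d - 1) / 2 : ℕ) : ℤ) - s + 1) - 1)]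
  · nlinarith [mul_nonneg hnn (by linarith : (0:ℤ) ≤ (d:ℤ) - 2 * ((((d - 1) / 2 : ℕ) : ℤ) - s + 1) - 1)]
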